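/- Consider the search problem of finding a (t+1)-collision for a map from M ≥ tN+1 pigeons to N holes, restricted by a partial assignment ρ which assigns at most tN/2 pigeons to holes such that no hole has more than t pigeons by ρ. Then any deterministic decision tree solving the restricted problem requires Ω(N) queries: an adversary can answer each query of an unassigned pigeon with a hole currently containing at most t−1 pigeons, for Ω(N) queries, without creating a (t+1)-collision. -/

import Mathlib

/-- Decision trees that query the hole of a pigeon and output a claimed
`(t+1)`-collision: a set of pigeons together with a hole. -/
inductive QTree (M N : ℕ) : Type where
  | leaf : Finset (Fin M) → Fin N → QTree M N
  | node : Fin M → (Fin N → QTree M N) → QTree M N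

namespace QTree

def depth {M N : ℕ} : QTree M N → ℕ
  | .leaf _ _ => 0
  | .node _ br => 1 + Finset.univ.sup fun h => (br h).depth

def run {M N : ℕ} : QTree M N → (Fin M → Fin N) → Finset (Fin M) × Fin N
  | .leaf s h, _ => (s, h)
  | .node p br, f => (br (f p)).run f

end QTree

open Finset in
lemma adversary_sum_le {M N : ℕ} (hN : 0 < N) (σ : Fin M → Option (Fin N)) :
    ∑ h : Fin N, (univ.filter fun p => σ p = some h).card ≤
      (univ.filter fun p => (σ p).isSome).card := by
  obtain ⟨d⟩ := Fin.pos_iff_nonempty.mp hN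
  have := Finset.card_eq_sum_card_fiberwise
    (s := univ.filter fun p => (σ p).isSome) (t := (univ : Finset (Fin N)))
    (f := fun p => (σ p).getD d) (fun x _ => mem_univ _)
  rw [this]
  apply le_of_eq
  refine Finset.sum_congr rfl fun h _ => ?_
  congr 1
  ext q
  simp only [mem_filter, mem_univ, true_and, Finset.filter_filter]
  cases e : σ q <;> simp [e]

open Finset in
lemma adversary {M N t : ℕ} (ht : 1 ≤ t) (hN : 2 ≤ N) :
    ∀ (T : QTree M N) (σ : Fin M → Option (Fin N)),
      (∀ h : Fin N, (univ.filter fun p => σ p = some h).card ≤ t) →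
      (univ.filter fun p => (σ p).isSome).card + T.depth < t * N →
      ∃ f : Fin M → Fin N, (∀ p h, σ p = some h → f p = h) ∧
        ((T.run f).1.card ≠ t + 1 ∨ ∃ p ∈ (T.run f).1, f p ≠ (T.run f).2) := by
  intro T
  induction T with
  | leaf s h =>
    intro σ hcnt _
    have : Nontrivial (Fin N) := Fin.nontrivial_iff_two_le.mpr hN
    obtain ⟨h', hh'⟩ := exists_ne h
    refine ⟨fun q => (σ q).getD h', fun p hp hpe => by simp [hpe], ?_⟩
    by_cases hc : s.card = t + 1
    · right
      have hns : ¬ s ⊆ univ.filter fun p => σ p = some h := by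
        intro hsub
        have := Finset.card_le_card hsub
        have := hcnt h
        omega
      obtain ⟨p, hp, hps⟩ := Finset.not_subset.mp hns
      simp only [mem_filter, mem_univ, true_and] at hps
      refine ⟨p, hp, ?_⟩
      show (σ p).getD h' ≠ h
      cases e : σ p with
      | none => simpa using hh'
      | some v =>
        simp only [Option.getD_some]
        intro hvh
        exact hps (by rw [e, hvh])
    · left; exact hc
  | node p br ih =>
    intro σ hcnt hlt
    have hdep : ∀ hh : Fin N, (br hh).depth + 1 ≤ (QTree.node p br).depth := by
      intro hh
      have h1 : (br hh).depth ≤ univ.sup fun h => (br h).depth :=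
        Finset.le_sup (f := fun h => (br h).depth) (mem_univ hh)
      simp only [QTree.depth]
      omega
    cases e : σ p with
    | some h0 =>
      obtain ⟨f, hf, hbad⟩ := ih h0 σ hcnt (by have := hdep h0; omega)
      refine ⟨f, hf, ?_⟩
      have hfp : f p = h0 := hf p h0 e
      simpa [QTree.run, hfp] using hbad
    | none =>
      have hex : ∃ h0 : Fin N, (univ.filter fun q => σ q = some h0).card < t := by
        by_contra hall
        push_neg at hall
        have h1 : t * N ≤ ∑ h0 : Fin N, (univ.filter fun q => σ q = some h0).card := by
          calc t * N = ∑ _h0 : Fin N, t := by simp [mul_comm]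
          _ ≤ _ := Finset.sum_le_sum fun h0 _ => hall h0
        have h2 := adversary_sum_le (by omega) σ
        omega
      obtain ⟨h0, hh0⟩ := hex
      set σ' := Function.update σ p (some h0) with hσ'
      have hpnot : p ∉ univ.filter fun q => (σ q).isSome := by simp [e]
      have hpnot2 : ∀ h : Fin N, p ∉ univ.filter fun q => σ q = some h := by
        intro h; simp [e]
      have hkey : ∀ h : Fin N, (univ.filter fun q => σ' q = some h) =
          if h = h0 then insert p (univ.filter fun q => σ q = some h)
          else (univ.filter fun q => σ q = some h) := by
        intro h
        split
        next heq =>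
          subst heq
          ext q
          by_cases hq : q = p <;>
            simp [hσ', Function.update_apply, hq]
        next heq =>
          ext q
          by_cases hq : q = p <;>
            simp [hσ', Function.update_apply, hq, Ne.symm heq, e]
      have hcnt' : ∀ h : Fin N, (univ.filter fun q => σ' q = some h).card ≤ t := by
        intro h
        rw [hkey h]
        split
        next heq =>
          rw [Finset.card_insert_of_notMem (hpnot2 h)]
          subst heq; omega
        next => exact hcnt h
      have hsome' : (univ.filter fun q => (σ' q).isSome).card =
          (univ.filter fun q => (σ q).isSome).card + 1 := by
        have : (univ.filter fun q => (σ' q).isSome) =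
            insert p (univ.filter fun q => (σ q).isSome) := by
          ext q
          by_cases hq : q = p <;>
            simp [hσ', Function.update_apply, hq]
        rw [this, Finset.card_insert_of_notMem hpnot]
      obtain ⟨f, hf, hbad⟩ := ih h0 σ' hcnt' (by have := hdep h0; omega)
      have hfp : f p = h0 := hf p h0 (by simp [hσ', Function.update_apply])
      refine ⟨f, ?_, ?_⟩
      · intro q h hq
        apply hf
        have hq' : q ≠ p := fun hc => by rw [hc, e] at hq; exact Option.some_ne_none h hq.symm
        simp [hσ', Function.update_apply, hq', hq]
      · simpa [QTree.run, hfp] using hbad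

/-- Adversary lower bound: finding a `(t+1)`-collision of a map from
`M ≥ tN + 1` pigeons to `N` holes, restricted by a partial assignment `ρ`
fixing at most `tN/2` pigeons with at most `t` per hole, requires at least
`N/2` queries. -/
theorem collision_query_lower_bound (M N t : ℕ) (ht : 1 ≤ t)
    (hM : t * N + 1 ≤ M)
    (ρ : Fin M → Option (Fin N))
    (hsize : (Finset.univ.filter fun p => (ρ p).isSome).card ≤ t * N / 2)
    (hhole : ∀ h : Fin N, (Finset.univ.filter fun p => ρ p = some h).card ≤ t)
    (T : QTree M N)
    (hsolve : ∀ f : Fin M → Fin N, (∀ p h, ρ p = some h → f p = h) →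
      (T.run f).1.card = t + 1 ∧ ∀ p ∈ (T.run f).1, f p = (T.run f).2) :
    N / 2 ≤ T.depth := by
  by_contra hlt
  push_neg at hlt
  have hN : 2 ≤ N := by omega
  have hmono : N / 2 ≤ t * N / 2 :=
    Nat.div_le_div_right (Nat.le_mul_of_pos_left _ ht)
  have harith : (Finset.univ.filter fun p => (ρ p).isSome).card + T.depth < t * N := by
    omega
  obtain ⟨f, hf, hbad⟩ := adversary ht hN T ρ hhole harith
  obtain ⟨hcard, hall⟩ := hsolve f hf
  rcases hbad with h1 | ⟨p, hp, hne⟩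
  · exact h1 hcard
  · exact hne (hall p hp)
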